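/- Let voters x_1 < ⋯ < x_n be the single-crossing order of the unregistered voters, and let κ be a full-d bundling function (bundles are swap-distance balls of radius d). Then every bundle κ(x_i) is a set of consecutively ordered voters: if x_j, x_k ∈ κ(x_i) and j < l < k, then x_l ∈ κ(x_i). -/

import Mathlib

/-- The swap (Kendall tau) distance between two strict linear orders. -/
def swapDist {C : Type*} [Fintype C] (r s : C → C → Prop)
    [DecidableRel r] [DecidableRel s] : ℕ :=
  (Finset.univ.filter (fun p : C × C => r p.1 p.2 ∧ s p.2 p.1)).card

/-- If the unregistered voters x_1 < ⋯ < x_n are in single-crossing order and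
κ is a full-d bundling function (swap-distance balls of radius d), then each
bundle consists of consecutively ordered voters. -/
theorem stmt17 {C : Type*} [Fintype C] {n : ℕ}
    (pref : Fin n → C → C → Prop) [∀ i, DecidableRel (pref i)]
    (hlin : ∀ i, IsStrictTotalOrder C (pref i))
    (hsc : ∀ a b : C, a ≠ b → ∀ i j k : Fin n, i < j → j < k →
      pref i a b → pref k a b → pref j a b)
    (d : ℕ) (κ : Fin n → Set (Fin n))
    (hfull : ∀ x : Fin n, κ x = {y : Fin n | swapDist (pref x) (pref y) ≤ d}) :
    ∀ i j k l : Fin n, j ∈ κ i → k ∈ κ i → j < l → l < k → l ∈ κ i := by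
  intro i j k l hj hk hjl hlk
  rw [hfull] at hj hk ⊢
  simp only [Set.mem_setOf_eq] at hj hk ⊢
  have asymm : ∀ m : Fin n, ∀ a b : C, pref m a b → ¬ pref m b a := by
    intro m a b hab hba
    exact (hlin m).irrefl a ((hlin m).trans a b a hab hba)
  have hne : ∀ (m : Fin n) (a b : C), pref m a b → a ≠ b := by
    intro m a b hab h
    exact (hlin m).irrefl a (h ▸ hab)
  rcases lt_trichotomy i l with hil | rfl | hli
  · -- i < l < k : disagreements of l with i are disagreements of k with i
    refine le_trans (Finset.card_le_card ?_) hk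
    intro p hp
    simp only [Finset.mem_filter, Finset.mem_univ, true_and] at hp ⊢
    obtain ⟨h1, h2⟩ := hp
    refine ⟨h1, ?_⟩
    rcases (by have := (hlin k).trichotomous p.2 p.1; tauto : pref k p.2 p.1 ∨ p.2 = p.1 ∨ pref k p.1 p.2) with h | h | h
    · exact h
    · exact absurd (h ▸ h1) ((hlin i).irrefl p.1)
    · exact absurd (hsc p.1 p.2 (hne i p.1 p.2 h1) i l k hil hlk h1 h) (asymm l p.1 p.2 · h2)
  · -- l = i : distance is 0
    have : (Finset.univ.filter
        (fun p : C × C => pref i p.1 p.2 ∧ pref i p.2 p.1)) = ∅ := by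
      apply Finset.filter_false_of_mem
      intro p _ h
      exact asymm i p.1 p.2 h.1 h.2
    simp [swapDist, this]
  · -- j < l < i : disagreements of l with i are disagreements of j with i
    refine le_trans (Finset.card_le_card ?_) hj
    intro p hp
    simp only [Finset.mem_filter, Finset.mem_univ, true_and] at hp ⊢
    obtain ⟨h1, h2⟩ := hp
    refine ⟨h1, ?_⟩
    rcases (by have := (hlin j).trichotomous p.2 p.1; tauto : pref j p.2 p.1 ∨ p.2 = p.1 ∨ pref j p.1 p.2) with h | h | h
    · exact h
    · exact absurd (h ▸ h1) ((hlin i).irrefl p.1)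
    · exact absurd (hsc p.1 p.2 (hne i p.1 p.2 h1) j l i hjl hli h h1) (asymm l p.1 p.2 · h2)
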